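/- In the greedy construction of the +(6+ε)W spanner (pairs sorted first by W_{u,v} then by d_G(u,v), path P_{u,v} added whenever d_H(u,v) > d_G(u,v) + (6+ε)W_{u,v}, starting from an n^{1/3}-light initialization), if the path P_{u,v} is added to the current spanner H₀, then the first and last edges of P_{u,v} are both missing from H₀. -/
import Mathlib


open Finset SimpleGraph
open scoped Classical

namespace AddSpanner

/-- Total weight of a walk. -/
noncomputable def walkWeight {V : Type} (w : V → V → ℝ) {G : SimpleGraph V} :
    ∀ {u v : V}, G.Walk u v → ℝ
  | _, _, .nil => 0
  | u, _, .cons (v := x) _ q => w u x + walkWeight w q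

/-- Maximum edge weight along a walk (0 for the trivial walk). -/
noncomputable def walkMaxW {V : Type} (w : V → V → ℝ) {G : SimpleGraph V} {u v : V}
    (p : G.Walk u v) : ℝ :=
  (p.darts.map fun d => w d.toProd.1 d.toProd.2).foldr max 0

/-- Weighted shortest-path distance (infimum over all walk weights). -/
noncomputable def wdist {V : Type} (G : SimpleGraph V) (w : V → V → ℝ) (u v : V) : ℝ :=
  sInf {x | ∃ p : G.Walk u v, walkWeight w p = x}

/-- A walk is a shortest path if it is a path whose weight realizes the distance. -/
def IsShortestPath {V : Type} (G : SimpleGraph V) (w : V → V → ℝ) {u v : V}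
    (p : G.Walk u v) : Prop :=
  p.IsPath ∧ walkWeight w p = wdist G w u v

/-- Number of `H`-neighbors of `x` reachable by an edge no heavier than the edge `{x,y}`. -/
noncomputable def lightDeg {V : Type} [Fintype V] (H : SimpleGraph V) (w : V → V → ℝ)
    (x y : V) : ℕ :=
  (Finset.univ.filter fun z => H.Adj x z ∧ w x z ≤ w x y).card

/-- `H` is a `t`-light initialization of `G`: it is a subgraph which, for every vertex,
contains its `t` lightest incident edges (all of them if the degree is at most `t`);
equivalently, whenever an edge `{x,y}` of `G` is missing from `H`, vertex `x` already has at
least `t` incident `H`-edges of weight at most `w x y`. -/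
def LightInit {V : Type} [Fintype V] (G H : SimpleGraph V) (w : V → V → ℝ) (t : ℝ) : Prop :=
  H ≤ G ∧ ∀ x y, G.Adj x y → ¬ H.Adj x y → t ≤ (lightDeg H w x y : ℝ)

/-- Number of edges of a graph. -/
noncomputable def numEdges {V : Type} (H : SimpleGraph V) : ℕ :=
  Nat.card H.edgeSet

variable {V : Type} {G : SimpleGraph V} {w : V → V → ℝ}

lemma walkWeight_cons {u x v : V} (h : G.Adj u x) (q : G.Walk x v) :
    walkWeight w (Walk.cons h q) = w u x + walkWeight w q := rfl

lemma walkWeight_nonneg (hw : ∀ x y, G.Adj x y → 0 ≤ w x y) :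
    ∀ {u v : V} (p : G.Walk u v), 0 ≤ walkWeight w p
  | _, _, .nil => le_refl 0
  | _, _, .cons h q => add_nonneg (hw _ _ h) (walkWeight_nonneg hw q)

lemma wdist_le (hw : ∀ x y, G.Adj x y → 0 ≤ w x y) {u v : V} (p : G.Walk u v) :
    wdist G w u v ≤ walkWeight w p :=
  csInf_le ⟨0, by rintro a ⟨q, rfl⟩; exact walkWeight_nonneg hw q⟩ ⟨p, rfl⟩

lemma wdist_nonneg (hw : ∀ x y, G.Adj x y → 0 ≤ w x y) (u v : V) :
    0 ≤ wdist G w u v :=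
  Real.sInf_nonneg (by rintro a ⟨p, rfl⟩; exact walkWeight_nonneg hw p)

lemma le_wdist {u v : V} {c : ℝ} (hne : Nonempty (G.Walk u v))
    (hc : ∀ p : G.Walk u v, c ≤ walkWeight w p) : c ≤ wdist G w u v := by
  unfold wdist
  exact le_csInf ⟨walkWeight w hne.some, hne.some, rfl⟩ (by rintro a ⟨r, rfl⟩; exact hc r)

lemma foldr_max_nonneg (l : List ℝ) : 0 ≤ l.foldr max 0 := by
  induction l with
  | nil => simp
  | cons a t ih => exact le_max_of_le_right ih

lemma walkMaxW_nonneg {u v : V} (p : G.Walk u v) : 0 ≤ walkMaxW w p :=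
  foldr_max_nonneg _

lemma foldr_max_init (a b : ℝ) (l : List ℝ) :
    l.foldr max (max a b) = max a (l.foldr max b) := by
  induction l with
  | nil => rfl
  | cons c t ih => simp only [List.foldr, ih, max_left_comm]

lemma foldr_max_reverse (l : List ℝ) : l.reverse.foldr max 0 = l.foldr max 0 := by
  induction l with
  | nil => rfl
  | cons a t ih =>
    rw [List.reverse_cons, List.foldr_append]
    show t.reverse.foldr max (max a 0) = max a (t.foldr max 0)
    rw [foldr_max_init, ih]

lemma walkMaxW_cons {u x v : V} (h : G.Adj u x) (q : G.Walk x v) :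
    walkMaxW w (Walk.cons h q) = max (w u x) (walkMaxW w q) := rfl

lemma walkWeight_append {u v x : V} (p : G.Walk u v) (q : G.Walk v x) :
    walkWeight w (p.append q) = walkWeight w p + walkWeight w q := by
  induction p with
  | nil => simp [walkWeight]
  | cons h r ih => simp [Walk.cons_append, walkWeight_cons, ih]; ring

lemma walkWeight_nil {u : V} : walkWeight w (Walk.nil : G.Walk u u) = 0 := rfl

lemma walkWeight_reverse (hsymm : ∀ x y, w x y = w y x) {u v : V} (p : G.Walk u v) :
    walkWeight w p.reverse = walkWeight w p := by
  induction p with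
  | nil => rfl
  | @cons a b c h r ih =>
    rw [Walk.reverse_cons, walkWeight_append, ih, walkWeight_cons, walkWeight_cons,
      walkWeight_nil, hsymm b a]
    ring

lemma walkMaxW_reverse (hsymm : ∀ x y, w x y = w y x) {u v : V} (p : G.Walk u v) :
    walkMaxW w p.reverse = walkMaxW w p := by
  unfold walkMaxW
  rw [Walk.darts_reverse, List.map_reverse, foldr_max_reverse, List.map_map]
  have hfe : ((fun d : G.Dart => w d.toProd.1 d.toProd.2) ∘ Dart.symm) =
      fun d : G.Dart => w d.toProd.1 d.toProd.2 := by
    funext d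
    simp [Function.comp, Dart.symm, hsymm d.toProd.2 d.toProd.1]
  rw [hfe]

lemma wdist_symm (G : SimpleGraph V) (hsymm : ∀ x y, w x y = w y x) (u v : V) :
    wdist G w u v = wdist G w v u := by
  unfold wdist
  congr 1
  ext a
  constructor
  · rintro ⟨p, rfl⟩; exact ⟨p.reverse, walkWeight_reverse hsymm p⟩
  · rintro ⟨p, rfl⟩; exact ⟨p.reverse, walkWeight_reverse hsymm p⟩

lemma first_edge_missing
    (hw : ∀ x y, G.Adj x y → 0 < w x y)
    {ε : ℝ} (hε : 0 < ε) {H₀ : SimpleGraph V} (hH₀ : H₀ ≤ G)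
    {u v : V} (huv : u ≠ v) (p : G.Walk u v) (hp : IsShortestPath G w p)
    (hadded : wdist H₀ w u v > wdist G w u v + (6 + ε) * walkMaxW w p)
    (hinv : ∀ (x y : V) (q : G.Walk x y), IsShortestPath G w q →
      (walkMaxW w q < walkMaxW w p ∨
        (walkMaxW w q = walkMaxW w p ∧ wdist G w x y < wdist G w u v)) →
      wdist H₀ w x y ≤ wdist G w x y + (6 + ε) * walkMaxW w q) :
    s(p.getVert 0, p.getVert 1) ∉ H₀.edgeSet := by
  have hwG : ∀ x y, G.Adj x y → 0 ≤ w x y := fun x y h => (hw x y h).le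
  have hwH : ∀ x y, H₀.Adj x y → 0 ≤ w x y := fun x y h => (hw x y (hH₀ h)).le
  intro hmem
  cases p with
  | nil => exact huv rfl
  | cons h q =>
    rename_i x
    simp only [Walk.getVert_zero, Walk.getVert_cons_succ] at hmem
    have hadj : H₀.Adj u x := (H₀.mem_edgeSet.1 hmem)
    have hWeq : w u x + walkWeight w q = wdist G w u v := hp.2
    have hq_le : wdist G w x v ≤ walkWeight w q := wdist_le hwG q
    have hq_ge : walkWeight w q ≤ wdist G w x v := by
      apply le_wdist ⟨q⟩
      intro r
      have h1 : wdist G w u v ≤ w u x + walkWeight w r := wdist_le hwG (Walk.cons h r)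
      linarith
    have hq_short : IsShortestPath G w q := ⟨hp.1.of_cons, le_antisymm hq_ge hq_le⟩
    have hWq : walkMaxW w q ≤ walkMaxW w (Walk.cons h q) := by
      rw [walkMaxW_cons]; exact le_max_right _ _
    have hdist_lt : wdist G w x v < wdist G w u v := by
      have hpos := hw u x h
      have := hq_short.2
      linarith
    have hstep : wdist H₀ w x v ≤ wdist G w x v + (6 + ε) * walkMaxW w q := by
      apply hinv x v q hq_short
      rcases lt_or_eq_of_le hWq with h' | h'
      · exact Or.inl h'
      · exact Or.inr ⟨h', hdist_lt⟩
    by_cases hc : Nonempty (H₀.Walk x v)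
    · have h5 : wdist H₀ w u v - w u x ≤ wdist H₀ w x v := by
        apply le_wdist hc
        intro r
        have := wdist_le hwH (Walk.cons hadj r)
        rw [walkWeight_cons] at this
        linarith
      have hWqWp : (6 + ε) * walkMaxW w q ≤ (6 + ε) * walkMaxW w (Walk.cons h q) :=
        mul_le_mul_of_nonneg_left hWq (by linarith)
      have hxv : wdist G w x v = walkWeight w q := hq_short.2.symm
      linarith
    · have hno : ¬ Nonempty (H₀.Walk u v) := fun ⟨r⟩ => hc ⟨Walk.cons hadj.symm r⟩
      have hempty : {y | ∃ r : H₀.Walk u v, walkWeight w r = y} = ∅ :=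
        Set.eq_empty_iff_forall_notMem.2 (by rintro a ⟨r, -⟩; exact hno ⟨r⟩)
      have h0 : wdist H₀ w u v = 0 := by unfold wdist; rw [hempty, Real.sInf_empty]
      have h1 : 0 ≤ wdist G w u v := wdist_nonneg hwG u v
      have h2 : 0 ≤ walkMaxW w (Walk.cons h q) := walkMaxW_nonneg _
      have h3 : 0 ≤ (6 + ε) * walkMaxW w (Walk.cons h q) := mul_nonneg (by linarith) h2
      linarith

end AddSpanner

open AddSpanner in
/-- in the greedy `+(6+ε)W` construction (pairs processed in nondecreasing order of
`W_{u,v}`, ties broken by `d_G`), when a shortest path `P_{u,v}` is added, its first and last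
edges are missing from the current spanner `H₀`. Here the algorithmic state is captured by the
invariant that every earlier pair already has stretch at most `+(6+ε)W` in `H₀`. -/
theorem greedy_first_last_edge_missing
    (V : Type) [Fintype V] [DecidableEq V] (n : ℕ) (hn : n = Fintype.card V)
    (G : SimpleGraph V) (w : V → V → ℝ)
    (hw : ∀ x y, G.Adj x y → 0 < w x y) (hsymm : ∀ x y, w x y = w y x)
    (ε : ℝ) (hε : 0 < ε)
    (HL H₀ : SimpleGraph V)
    (hlight : LightInit G HL w ((n : ℝ) ^ ((1 : ℝ) / 3)))
    (hLH : HL ≤ H₀) (hH₀ : H₀ ≤ G)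
    (u v : V) (huv : u ≠ v) (p : G.Walk u v) (hp : IsShortestPath G w p)
    -- `P_{u,v}` is about to be added:
    (hadded : wdist H₀ w u v > wdist G w u v + (6 + ε) * walkMaxW w p)
    -- every pair processed earlier already has small stretch in `H₀`:
    (hinv : ∀ (x y : V) (q : G.Walk x y), IsShortestPath G w q →
      (walkMaxW w q < walkMaxW w p ∨
        (walkMaxW w q = walkMaxW w p ∧ wdist G w x y < wdist G w u v)) →
      wdist H₀ w x y ≤ wdist G w x y + (6 + ε) * walkMaxW w q) :
    s(p.getVert 0, p.getVert 1) ∉ H₀.edgeSet ∧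
      s(p.getVert (p.length - 1), p.getVert p.length) ∉ H₀.edgeSet := by
  refine ⟨first_edge_missing hw hε hH₀ huv p hp hadded hinv, ?_⟩
  have hrev : IsShortestPath G w p.reverse :=
    ⟨hp.1.reverse, by rw [walkWeight_reverse hsymm, hp.2, wdist_symm G hsymm]⟩
  have hadded' : wdist H₀ w v u > wdist G w v u + (6 + ε) * walkMaxW w p.reverse := by
    rw [wdist_symm H₀ hsymm v u, wdist_symm G hsymm v u, walkMaxW_reverse hsymm]
    exact hadded
  have hinv' : ∀ (x y : V) (q : G.Walk x y), IsShortestPath G w q →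
      (walkMaxW w q < walkMaxW w p.reverse ∨
        (walkMaxW w q = walkMaxW w p.reverse ∧ wdist G w x y < wdist G w v u)) →
      wdist H₀ w x y ≤ wdist G w x y + (6 + ε) * walkMaxW w q := by
    intro x y q hq hc
    apply hinv x y q hq
    rwa [walkMaxW_reverse hsymm, wdist_symm G hsymm v u] at hc
  have h2 := first_edge_missing hw hε hH₀ huv.symm p.reverse hrev hadded' hinv'
  rw [Walk.getVert_reverse, Walk.getVert_reverse] at h2
  simp only [Nat.sub_zero] at h2
  intro hmem
  exact h2 (by rwa [Sym2.eq_swap] at hmem)
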